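/- Let $\mathcal{X} \subseteq \mathbb{R}^d$ be closed and convex, $F$ convex on $\mathcal{X}$ with $x_* \in \mathcal{X}$, let $x \in \mathcal{X}$, $\partial \in \partial F(x)$ with $\|\partial\| \le G$, let $g \in \mathbb{R}^d$ and $\eta > 0$, and set $x^+ = \Pi_{\mathcal{X}}(x - \eta g)$, $\xi = g - \partial$. If additionally $F(x) \ge F(x_*) + \langle \partial', x - x_* \rangle + \frac{\mu}{2}\|x - x_*\|^2$ holds for subgradients (i.e., $F$ is $\mu$-strongly convex, $\mu \ge 0$), then writing $\xi = \xi^u + \xi^b$ for any decomposition, $F(x) - F(x_*) + \frac{1}{2\eta}\|x^+ - x_*\|^2 - \frac{\eta^{-1} - \mu}{2}\|x - x_*\|^2 \le \langle \xi, x_* - x \rangle + \eta\,(2\|\xi^u\|^2 + 2\|\xi^b\|^2 + G^2)$. -/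

import Mathlib

open scoped RealInnerProductSpace

/-- One-step descent inequality for projected clipped SGD: if `x⁺ = Π_𝒳(x - η g)` (characterized
by the variational inequality of the Euclidean projection), `∂ ∈ ∂F(x)` with `‖∂‖ ≤ G`,
`F` is `μ`-strongly convex at `x` toward `x⋆`, and `ξ = g - ∂ = ξᵘ + ξᵇ`, then
`F(x) - F(x⋆) + (1/(2η))‖x⁺ - x⋆‖² - ((η⁻¹ - μ)/2)‖x - x⋆‖²
  ≤ ⟨ξ, x⋆ - x⟩ + η (2‖ξᵘ‖² + 2‖ξᵇ‖² + G²)`. -/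
theorem one_step_descent {d : ℕ}
    (𝒳 : Set (EuclideanSpace ℝ (Fin d))) (hclosed : IsClosed 𝒳) (hconv : Convex ℝ 𝒳)
    (F : EuclideanSpace ℝ (Fin d) → ℝ)
    (x xstar xplus sg g ξu ξb : EuclideanSpace ℝ (Fin d))
    (G μ η : ℝ)
    (hx : x ∈ 𝒳) (hxstar : xstar ∈ 𝒳) (hxplus : xplus ∈ 𝒳)
    (hμ : 0 ≤ μ) (hη : 0 < η) (hG : ‖sg‖ ≤ G)
    (hsc : F x + ⟪sg, xstar - x⟫ + μ / 2 * ‖xstar - x‖ ^ 2 ≤ F xstar)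
    (hproj : ∀ z ∈ 𝒳, (0 : ℝ) ≤ ⟪xplus - (x - η • g), z - xplus⟫)
    (hdecomp : g - sg = ξu + ξb) :
    F x - F xstar + 1 / (2 * η) * ‖xplus - xstar‖ ^ 2
        - (η⁻¹ - μ) / 2 * ‖x - xstar‖ ^ 2
      ≤ ⟪g - sg, xstar - x⟫ + η * (2 * ‖ξu‖ ^ 2 + 2 * ‖ξb‖ ^ 2 + G ^ 2) := by
  have hηne : η ≠ 0 := ne_of_gt hη
  -- projection inequality at xstar
  have h1 : (0:ℝ) ≤ ⟪xplus - (x - η • g), xstar - xplus⟫ := hproj xstar hxstar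
  -- identity expansion of the projection inner product
  have e1 : ⟪xplus - (x - η • g), xstar - xplus⟫
      = (‖x - xstar‖^2 - ‖xplus - xstar‖^2 - ‖xplus - x‖^2)/2 + η * ⟪g, xstar - xplus⟫ := by
    simp only [← real_inner_self_eq_norm_sq, inner_sub_left, inner_sub_right,
      real_inner_smul_left]
    linarith [real_inner_comm x xplus, real_inner_comm xstar xplus, real_inner_comm x xstar,
      real_inner_comm g xplus, real_inner_comm g xstar, real_inner_comm g x]
  have h1' : ‖xplus - xstar‖^2 ≤ ‖x - xstar‖^2 - ‖xplus - x‖^2 + 2*η*⟪g, xstar - xplus⟫ := by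
    rw [e1] at h1; linarith
  have hA : 1/η/2 * ‖xplus - xstar‖^2
      ≤ 1/η/2*‖x - xstar‖^2 - 1/η/2*‖xplus - x‖^2 + ⟪g, xstar - xplus⟫ := by
    have h := mul_le_mul_of_nonneg_left h1' (show (0:ℝ) ≤ 1/η/2 by positivity)
    have e : 1/η/2*(‖x - xstar‖^2 - ‖xplus - x‖^2 + 2*η*⟪g, xstar - xplus⟫)
        = 1/η/2*‖x - xstar‖^2 - 1/η/2*‖xplus - x‖^2 + ⟪g, xstar - xplus⟫ := by
      field_simp
    linarith
  -- Young's inequality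
  have h2 : (0:ℝ) ≤ ‖η • g - (x - xplus)‖^2 := by positivity
  have e2 : ‖η • g - (x - xplus)‖^2
      = η^2*‖g‖^2 - 2*η*⟪g, x - xplus⟫ + ‖xplus - x‖^2 := by
    simp only [← real_inner_self_eq_norm_sq, inner_sub_left, inner_sub_right,
      real_inner_smul_left, real_inner_smul_right]
    linear_combination η * real_inner_comm x g - η * real_inner_comm xplus g
  have hB : 2*η*⟪g, x - xplus⟫ ≤ η^2*‖g‖^2 + ‖xplus - x‖^2 := by rw [e2] at h2; linarith
  have hB' : ⟪g, x - xplus⟫ ≤ η/2*‖g‖^2 + 1/η/2*‖xplus - x‖^2 := by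
    have h := mul_le_mul_of_nonneg_left hB (show (0:ℝ) ≤ 1/η/2 by positivity)
    have e : 1/η/2*(2*η*⟪g, x - xplus⟫) = ⟪g, x - xplus⟫ := by field_simp
    have e' : 1/η/2*(η^2*‖g‖^2 + ‖xplus - x‖^2)
        = η/2*‖g‖^2 + 1/η/2*‖xplus - x‖^2 := by field_simp
    linarith
  -- bound on ‖g‖²
  have hg : g = ξu + ξb + sg := by rw [← hdecomp]; abel
  have hC : ‖g‖^2 ≤ 4*‖ξu‖^2 + 4*‖ξb‖^2 + 2*G^2 := by
    have h3 : (0:ℝ) ≤ ‖ξu - ξb‖^2 := by positivity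
    have h4 : (0:ℝ) ≤ ‖ξu + ξb - sg‖^2 := by positivity
    have hGsq : ‖sg‖^2 ≤ G^2 := by nlinarith [norm_nonneg sg]
    rw [hg]
    simp only [← real_inner_self_eq_norm_sq, inner_sub_left, inner_sub_right,
      inner_add_left, inner_add_right] at h3 h4 ⊢
    simp only [← real_inner_self_eq_norm_sq] at hGsq
    linarith [real_inner_comm ξu ξb, real_inner_comm ξu sg, real_inner_comm ξb sg]
  have hC' := mul_le_mul_of_nonneg_left hC (show (0:ℝ) ≤ η/2 by positivity)
  -- decompose the cross term
  have hD : ⟪g, xstar - xplus⟫ = ⟪g - sg, xstar - x⟫ + ⟪sg, xstar - x⟫ + ⟪g, x - xplus⟫ := by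
    simp only [inner_sub_left, inner_sub_right]; ring
  have hnx : ‖xstar - x‖^2 = ‖x - xstar‖^2 := by rw [← neg_sub, norm_neg]
  rw [hnx] at hsc
  rw [show (1:ℝ)/(2*η) = 1/η/2 by field_simp, show (η:ℝ)⁻¹ = 1/η by rw [one_div]]
  linarith
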